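/- For all positive integers s and t with t ≥ 2, every connected graph G that is P_t-free, SDK_s-free, and K_4-free has a dominating set of size at most (1 + R(4, R(4, s)))^(t-2). -/

import Mathlib

open SimpleGraph

/-- The Ramsey number `R(k, l)`: the least `N` such that every finite simple graph with at
least `N` vertices contains a clique with `k` vertices or an independent set with `l`
vertices (an independent set of size `l` is a clique of size `l` in the complement). -/
noncomputable def ramseyNumber (k l : ℕ) : ℕ :=
  sInf {N | ∀ (V : Type) [Fintype V] (G : SimpleGraph V),
    N ≤ Fintype.card V →
      (∃ S : Finset V, G.IsNClique k S) ∨ (∃ S : Finset V, Gᶜ.IsNClique l S)}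

/-- The one-subdivision of `K_{1,s}`: a center `Sum.inl ()`, middle vertices
`Sum.inr (Sum.inl i)` and leaves `Sum.inr (Sum.inr i)`; the center is adjacent to every
middle vertex, and the `i`-th middle vertex is adjacent to the `i`-th leaf. -/
def SDK (s : ℕ) : SimpleGraph (Unit ⊕ Fin s ⊕ Fin s) :=
  SimpleGraph.fromRel (fun a b =>
    (∃ i : Fin s, a = Sum.inl () ∧ b = Sum.inr (Sum.inl i)) ∨
    (∃ i : Fin s, a = Sum.inr (Sum.inl i) ∧ b = Sum.inr (Sum.inr i)))

/-- `G` is `H`-free: no induced subgraph of `G` is isomorphic to `H`. -/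
def IsFree {W V : Type*} (H : SimpleGraph W) (G : SimpleGraph V) : Prop :=
  ¬ Nonempty (H ↪g G)

def RamseyProp (k l N : ℕ) : Prop :=
  ∀ (V : Type) [Fintype V] (G : SimpleGraph V),
    N ≤ Fintype.card V →
      (∃ S : Finset V, G.IsNClique k S) ∨ (∃ S : Finset V, Gᶜ.IsNClique l S)

lemma isNClique_map_of_induce {V : Type*} {G : SimpleGraph V} {s : Set V} {S : Finset s} {n : ℕ}
    (h : (G.induce s).IsNClique n S) :
    G.IsNClique n (S.map (Function.Embedding.subtype _)) := by
  rw [isNClique_iff] at h ⊢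
  refine ⟨?_, by rw [Finset.card_map]; exact h.2⟩
  intro a ha b hb hab
  simp only [Finset.coe_map, Set.mem_image, Finset.mem_coe, Function.Embedding.coe_subtype] at ha hb
  obtain ⟨a', ha', rfl⟩ := ha
  obtain ⟨b', hb', rfl⟩ := hb
  have := h.1 ha' hb' (fun hc => hab (by rw [hc]))
  simpa using this

lemma isNClique_map_of_induce_compl {V : Type*} {G : SimpleGraph V} {s : Set V} {S : Finset s} {n : ℕ}
    (h : ((G.induce s)ᶜ).IsNClique n S) :
    Gᶜ.IsNClique n (S.map (Function.Embedding.subtype _)) := by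
  rw [isNClique_iff] at h ⊢
  refine ⟨?_, by rw [Finset.card_map]; exact h.2⟩
  intro a ha b hb hab
  simp only [Finset.coe_map, Set.mem_image, Finset.mem_coe, Function.Embedding.coe_subtype] at ha hb
  obtain ⟨a', ha', rfl⟩ := ha
  obtain ⟨b', hb', rfl⟩ := hb
  have := h.1 ha' hb' (fun hc => hab (by rw [hc]))
  simp only [compl_adj, comap_adj, Function.Embedding.coe_subtype] at this ⊢
  exact ⟨hab, this.2⟩

lemma mem_of_mem_map_subtype {V : Type*} {s : Set V} {S : Finset s} {a : V}
    (ha : a ∈ S.map (Function.Embedding.subtype _)) : a ∈ s := by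
  simp only [Finset.mem_map, Function.Embedding.coe_subtype] at ha
  obtain ⟨⟨a', ha'⟩, _, rfl⟩ := ha
  exact ha'

lemma ramseyProp_step (k l N₁ N₂ : ℕ) (h₁ : RamseyProp k (l + 1) N₁)
    (h₂ : RamseyProp (k + 1) l N₂) : RamseyProp (k + 1) (l + 1) (N₁ + N₂ + 1) := by
  intro V _ G hcard
  classical
  have hne : Nonempty V := Fintype.card_pos_iff.mp (by omega)
  obtain ⟨v⟩ := hne
  set A : Finset V := Finset.univ.filter (fun u => G.Adj v u) with hA
  set B : Finset V := Finset.univ.filter (fun u => ¬ G.Adj v u ∧ u ≠ v) with hB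
  have hcards : A.card + B.card + 1 = Fintype.card V := by
    have h1 : (Finset.univ.filter (fun u => G.Adj v u)).card
        + (Finset.univ.filter (fun u => ¬ G.Adj v u)).card = Fintype.card V := by
      rw [Finset.card_filter_add_card_filter_not]; rfl
    have h2 : B = (Finset.univ.filter (fun u => ¬ G.Adj v u)).erase v := by
      ext u
      simp only [hB, Finset.mem_filter, Finset.mem_erase, Finset.mem_univ, true_and]
      tauto
    have hv : v ∈ Finset.univ.filter (fun u => ¬ G.Adj v u) := by simp
    have := Finset.card_erase_of_mem hv
    rw [hA, h2, this]
    have : 0 < (Finset.univ.filter (fun u => ¬ G.Adj v u)).card := Finset.card_pos.mpr ⟨v, hv⟩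
    omega
  by_cases hAc : N₁ ≤ A.card
  · -- neighbors
    have hcardA : N₁ ≤ Fintype.card (↑A : Set V) := by simpa using hAc
    rcases h₁ (↑A : Set V) (G.induce ↑A) hcardA with ⟨S, hS⟩ | ⟨S, hS⟩
    · left
      have hS' := isNClique_map_of_induce hS
      refine ⟨insert v (S.map (Function.Embedding.subtype _)), hS'.insert ?_⟩
      intro b hb
      have := mem_of_mem_map_subtype hb
      simp only [hA, Finset.coe_filter, Set.mem_setOf_eq, Finset.mem_univ, true_and] at this
      exact this
    · right
      refine ⟨S.map (Function.Embedding.subtype _), ?_⟩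
      have : ((G.induce (↑A : Set V))ᶜ) = (Gᶜ).induce ↑A := by
        ext a b
        simp only [compl_adj, comap_adj, Function.Embedding.coe_subtype, ne_eq,
          Subtype.ext_iff]
      rw [this] at hS
      have := isNClique_map_of_induce hS
      exact this
  · -- non-neighbors
    have hBc : N₂ ≤ B.card := by omega
    have hcardB : N₂ ≤ Fintype.card (↑B : Set V) := by simpa using hBc
    rcases h₂ (↑B : Set V) (G.induce ↑B) hcardB with ⟨S, hS⟩ | ⟨S, hS⟩
    · left
      exact ⟨S.map (Function.Embedding.subtype _), isNClique_map_of_induce hS⟩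
    · right
      have hS' := isNClique_map_of_induce_compl hS
      refine ⟨insert v (S.map (Function.Embedding.subtype _)), hS'.insert ?_⟩
      intro b hb
      have := mem_of_mem_map_subtype hb
      simp only [hB, Finset.coe_filter, Set.mem_setOf_eq, Finset.mem_univ, true_and] at this
      exact ⟨this.2.symm, this.1⟩

lemma ramsey_exists (k : ℕ) : ∀ l, ∃ N, RamseyProp k l N := by
  induction k with
  | zero => exact fun l => ⟨0, fun _ _ _ _ => Or.inl ⟨∅, by simp⟩⟩
  | succ k ihk =>
    intro l
    induction l with
    | zero => exact ⟨0, fun _ _ _ _ => Or.inr ⟨∅, by simp⟩⟩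
    | succ l ihl =>
      obtain ⟨N₁, h₁⟩ := ihk (l + 1)
      obtain ⟨N₂, h₂⟩ := ihl
      exact ⟨N₁ + N₂ + 1, ramseyProp_step k l N₁ N₂ h₁ h₂⟩

lemma ramsey_spec (k l : ℕ) : RamseyProp k l (ramseyNumber k l) :=
  Nat.sInf_mem (ramsey_exists k l)

/-- From a 4-clique get an embedding of `completeGraph (Fin 4)`. -/
lemma embedding_of_4clique {V : Type*} {G : SimpleGraph V} {S : Finset V}
    (hS : G.IsNClique 4 S) : Nonempty (completeGraph (Fin 4) ↪g G) := by
  have hc : Fintype.card (↥S) = 4 := by rw [Fintype.card_coe]; exact hS.2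
  let e := Fintype.equivFinOfCardEq hc
  refine ⟨⟨⟨fun i => ↑(e.symm i), ?_⟩, ?_⟩⟩
  · intro a b hab
    have : e.symm a = e.symm b := Subtype.ext hab
    simpa using congrArg e this
  · intro a b
    constructor
    · intro h
      simp only [completeGraph, top_adj, ne_eq]
      intro hab
      exact G.irrefl (hab ▸ h)
    · intro h
      have hne : (e.symm a : V) ≠ (e.symm b : V) := by
        intro hc2
        have : e.symm a = e.symm b := Subtype.ext hc2
        have := congrArg e this
        simp only [Equiv.apply_symm_apply] at this
        exact (by simpa [completeGraph] using h : a ≠ b) this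
      exact hS.1 (e.symm a).2 (e.symm b).2 hne

/-- Ramsey applied inside a `K₄`-free graph: any big enough finset contains an
independent set of prescribed size. -/
lemma ramsey_indep {V : Type} [Fintype V] {G : SimpleGraph V}
    (hK4 : IsFree (completeGraph (Fin 4)) G) (X : Finset V) (m : ℕ)
    (hX : ramseyNumber 4 m ≤ X.card) :
    ∃ I : Finset V, ↑I ⊆ (↑X : Set V) ∧ I.card = m ∧
      ∀ a ∈ I, ∀ b ∈ I, a ≠ b → ¬ G.Adj a b := by
  have hcard : ramseyNumber 4 m ≤ Fintype.card (↑X : Set V) := by simpa using hX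
  rcases ramsey_spec 4 m (↑X : Set V) (G.induce ↑X) hcard with ⟨S, hS⟩ | ⟨S, hS⟩
  · exact absurd (embedding_of_4clique (isNClique_map_of_induce hS)) hK4
  · have hS' := isNClique_map_of_induce_compl hS
    refine ⟨S.map (Function.Embedding.subtype _), ?_, hS'.2, ?_⟩
    · intro a ha
      exact mem_of_mem_map_subtype (by simpa using ha)
    · intro a ha b hb hab
      have := hS'.1 (by simpa using ha) (by simpa using hb) hab
      exact (compl_adj G a b).mp this |>.2

lemma SDK_adj_cm {s : ℕ} (j : Fin s) :
    (SDK s).Adj (Sum.inl ()) (Sum.inr (Sum.inl j)) := by simp [SDK, fromRel_adj]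

lemma SDK_nadj_cl {s : ℕ} (j : Fin s) :
    ¬ (SDK s).Adj (Sum.inl ()) (Sum.inr (Sum.inr j)) := by simp [SDK, fromRel_adj]

lemma SDK_nadj_mm {s : ℕ} (i j : Fin s) :
    ¬ (SDK s).Adj (Sum.inr (Sum.inl i)) (Sum.inr (Sum.inl j)) := by simp [SDK, fromRel_adj]

lemma SDK_adj_ml {s : ℕ} (i j : Fin s) :
    (SDK s).Adj (Sum.inr (Sum.inl i)) (Sum.inr (Sum.inr j)) ↔ i = j := by
  simp [SDK, fromRel_adj]; exact eq_comm

lemma SDK_nadj_ll {s : ℕ} (i j : Fin s) :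
    ¬ (SDK s).Adj (Sum.inr (Sum.inr i)) (Sum.inr (Sum.inr j)) := by simp [SDK, fromRel_adj]

lemma exists_small_dominator {V : Type} [Fintype V] {G : SimpleGraph V} {s : ℕ}
    (hSDK : IsFree (SDK s) G) (hK4 : IsFree (completeGraph (Fin 4)) G) (u : V) :
    ∃ A : Finset V, (∀ a ∈ A, G.Adj u a) ∧ A.card ≤ ramseyNumber 4 (ramseyNumber 4 s) ∧
      ∀ w : V, ¬ G.Adj u w → w ≠ u → (∃ x, G.Adj u x ∧ G.Adj x w) →
        ∃ a ∈ A, G.Adj w a := by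
  classical
  set r := ramseyNumber 4 (ramseyNumber 4 s) with hr
  set Wp : V → Prop := fun w => ¬ G.Adj u w ∧ w ≠ u ∧ ∃ x, G.Adj u x ∧ G.Adj x w with hWp
  set NB : Finset V := Finset.univ.filter (fun x => G.Adj u x) with hNB
  set C : Finset (Finset V) := NB.powerset.filter (fun M => ∀ w, Wp w → ∃ a ∈ M, G.Adj w a)
    with hC
  have hNBC : NB ∈ C := by
    rw [hC, Finset.mem_filter, Finset.mem_powerset]
    refine ⟨subset_rfl, ?_⟩
    rintro w ⟨-, -, x, hux, hxw⟩
    exact ⟨x, by simp [hNB, hux], hxw.symm⟩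
  obtain ⟨M, hMC, hMmin⟩ := C.exists_min_image Finset.card ⟨NB, hNBC⟩
  rw [hC, Finset.mem_filter, Finset.mem_powerset] at hMC
  have hMsub : M ⊆ NB := hMC.1
  have hMadj : ∀ a ∈ M, G.Adj u a := fun a ha => by
    have := hMsub ha; rw [hNB, Finset.mem_filter] at this; exact this.2
  have hMdom : ∀ w, Wp w → ∃ a ∈ M, G.Adj w a := hMC.2
  by_cases hcard : M.card ≤ r
  · exact ⟨M, hMadj, hcard, fun w h1 h2 h3 => hMdom w ⟨h1, h2, h3⟩⟩
  exfalso
  have hpriv : ∀ x ∈ M, ∃ w, Wp w ∧ G.Adj x w ∧ ∀ y ∈ M, y ≠ x → ¬ G.Adj y w := by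
    intro x hx
    by_contra hcon
    push_neg at hcon
    have hMe : M.erase x ∈ C := by
      rw [hC, Finset.mem_filter, Finset.mem_powerset]
      refine ⟨(Finset.erase_subset _ _).trans hMsub, ?_⟩
      intro w hw
      obtain ⟨a, haM, haw⟩ := hMdom w hw
      by_cases hax : a = x
      · obtain ⟨y, hyM, hyx, hyw⟩ := hcon w hw (hax ▸ haw).symm
        exact ⟨y, Finset.mem_erase.mpr ⟨hyx, hyM⟩, hyw.symm⟩
      · exact ⟨a, Finset.mem_erase.mpr ⟨hax, haM⟩, haw⟩
    have h1 := hMmin _ hMe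
    rw [Finset.card_erase_of_mem hx] at h1
    have h2 : 0 < M.card := Finset.card_pos.mpr ⟨x, hx⟩
    omega
  have hpriv' : ∀ x : V, ∃ w, x ∈ M → Wp w ∧ G.Adj x w ∧ ∀ y ∈ M, y ≠ x → ¬ G.Adj y w := by
    intro x
    by_cases hx : x ∈ M
    · obtain ⟨w, h⟩ := hpriv x hx; exact ⟨w, fun _ => h⟩
    · exact ⟨u, fun h => absurd h hx⟩
  choose wf hwf using hpriv'
  have hMr : ramseyNumber 4 (ramseyNumber 4 s) ≤ M.card := by omega
  obtain ⟨I, hIM, hIcard, hIindep⟩ := ramsey_indep hK4 M (ramseyNumber 4 s) hMr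
  have hIM' : ∀ x ∈ I, x ∈ M := fun x hx => by
    have : (x : V) ∈ (↑M : Set V) := hIM (by simpa using hx)
    simpa using this
  have hinjI : Set.InjOn wf ↑I := by
    intro x hx y hy hxy
    by_contra hne
    have h1 := (hwf x (hIM' x hx)).2.1
    have h2 := (hwf y (hIM' y hy)).2.2 x (hIM' x hx) hne
    exact h2 (hxy ▸ h1)
  set P : Finset V := I.image wf with hP
  have hPcard : P.card = ramseyNumber 4 s := by
    rw [hP, Finset.card_image_of_injOn hinjI, hIcard]
  obtain ⟨J, hJP, hJcard, hJindep⟩ := ramsey_indep hK4 P s (le_of_eq hPcard.symm)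
  set M' : Finset V := I.filter (fun x => wf x ∈ J) with hM'
  have hM'I : ∀ x ∈ M', x ∈ I := fun x hx => (Finset.mem_filter.mp (hM' ▸ hx)).1
  have hM'card : M'.card = s := by
    have himg : M'.image wf = J := by
      apply Finset.Subset.antisymm
      · intro jj hj
        simp only [hM', Finset.mem_image, Finset.mem_filter] at hj
        obtain ⟨x, ⟨hxI, hxJ⟩, rfl⟩ := hj
        exact hxJ
      · intro jj hj
        have hjP : (jj : V) ∈ (↑P : Set V) := hJP (by simpa using hj)
        rw [hP] at hjP
        simp only [Finset.coe_image, Set.mem_image, Finset.mem_coe] at hjP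
        obtain ⟨x, hxI, rfl⟩ := hjP
        simp only [hM', Finset.mem_image, Finset.mem_filter]
        exact ⟨x, ⟨hxI, hj⟩, rfl⟩
    have hinj' : Set.InjOn wf ↑M' := hinjI.mono (fun x hx => by
      simpa using hM'I x (by simpa using hx))
    rw [← hJcard, ← himg, Finset.card_image_of_injOn hinj']
  have e := Fintype.equivFinOfCardEq ((Fintype.card_coe M').trans hM'card)
  set x : Fin s → V := fun i => ↑(e.symm i) with hx
  have hxM' : ∀ i, x i ∈ M' := fun i => (e.symm i).2
  have hxI : ∀ i, x i ∈ I := fun i => hM'I _ (hxM' i)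
  have hxM : ∀ i, x i ∈ M := fun i => hIM' _ (hxI i)
  have hxJ : ∀ i, wf (x i) ∈ J := fun i =>
    (Finset.mem_filter.mp (show x i ∈ I.filter (fun y => wf y ∈ J) from hxM' i)).2
  have hxinj : ∀ i j, x i = x j → i = j := fun i j h => by
    have h2 : e.symm i = e.symm j := Subtype.ext h
    simpa using congrArg e h2
  have hW : ∀ i, Wp (wf (x i)) := fun i => (hwf _ (hxM i)).1
  have hA1 : ∀ i, G.Adj u (x i) := fun i => hMadj _ (hxM i)
  have hA2 : ∀ i, G.Adj (x i) (wf (x i)) := fun i => (hwf _ (hxM i)).2.1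
  have hN1 : ∀ i, ¬ G.Adj u (wf (x i)) := fun i => (hW i).1
  have hNu : ∀ i, wf (x i) ≠ u := fun i => (hW i).2.1
  have hN2 : ∀ i j, i ≠ j → ¬ G.Adj (x i) (x j) := fun i j hij =>
    hIindep _ (hxI i) _ (hxI j) (fun h => hij (hxinj _ _ h))
  have hN3 : ∀ i j, i ≠ j → ¬ G.Adj (x i) (wf (x j)) := fun i j hij =>
    (hwf _ (hxM j)).2.2 (x i) (hxM i) (fun h => hij (hxinj _ _ h))
  have hwfne : ∀ i j, i ≠ j → wf (x i) ≠ wf (x j) := fun i j hij h =>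
    hij (hxinj _ _ (hinjI (by simpa using hxI i) (by simpa using hxI j) h))
  have hN4 : ∀ i j, i ≠ j → ¬ G.Adj (wf (x i)) (wf (x j)) := fun i j hij =>
    hJindep _ (hxJ i) _ (hxJ j) (hwfne i j hij)
  have hD3 : ∀ i j, x i ≠ wf (x j) := fun i j h => hN1 j (h ▸ hA1 i)
  apply hSDK
  refine ⟨⟨⟨Sum.elim (fun _ => u) (Sum.elim x (fun i => wf (x i))), ?_⟩, ?_⟩⟩
  · rintro (⟨⟩|i|i) (⟨⟩|j|j) h <;>
      simp only [Sum.elim_inl, Sum.elim_inr] at h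
    · rfl
    · exact absurd h (hA1 j).ne
    · exact absurd h.symm (hNu j)
    · exact absurd h.symm (hA1 i).ne
    · exact congrArg _ (congrArg _ (hxinj i j h))
    · exact absurd h (hD3 i j)
    · exact absurd h (hNu i)
    · exact absurd h.symm (hD3 j i)
    · refine congrArg _ (congrArg _ ?_)
      by_contra hij
      exact hwfne i j hij h
  · show ∀ a b, G.Adj (Sum.elim (fun _ => u) (Sum.elim x (fun i => wf (x i))) a)
        (Sum.elim (fun _ => u) (Sum.elim x (fun i => wf (x i))) b) ↔ (SDK s).Adj a b
    rintro (⟨⟩|i|i) (⟨⟩|j|j) <;>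
      simp only [Function.Embedding.coeFn_mk, Sum.elim_inl, Sum.elim_inr]
    · exact iff_of_false (G.irrefl) ((SDK s).irrefl)
    · exact iff_of_true (hA1 j) (SDK_adj_cm j)
    · exact iff_of_false (hN1 j) (SDK_nadj_cl j)
    · exact iff_of_true (hA1 i).symm (SDK_adj_cm i).symm
    · refine iff_of_false ?_ (SDK_nadj_mm i j)
      by_cases hij : i = j
      · subst hij; exact G.irrefl
      · exact hN2 i j hij
    · constructor
      · intro h
        rw [SDK_adj_ml]
        by_contra hij
        exact hN3 i j hij h
      · intro h
        rw [SDK_adj_ml] at h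
        subst h
        exact hA2 i
    · exact iff_of_false (fun h => hN1 i h.symm) (fun h => SDK_nadj_cl i h.symm)
    · constructor
      · intro h
        rw [show ((SDK s).Adj (Sum.inr (Sum.inr i)) (Sum.inr (Sum.inl j)) ↔ j = i) from
          ⟨fun hh => (SDK_adj_ml j i).mp hh.symm, fun hh => ((SDK_adj_ml j i).mpr hh).symm⟩]
        by_contra hij
        exact hN3 j i hij h.symm
      · intro h
        have hji : j = i := (SDK_adj_ml j i).mp h.symm
        subst hji
        exact (hA2 j).symm
    · refine iff_of_false ?_ (SDK_nadj_ll i j)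
      by_cases hij : i = j
      · subst hij; exact G.irrefl
      · exact hN4 i j hij

lemma walk_take {V : Type*} {G : SimpleGraph V} {u v : V} (p : G.Walk u v) :
    ∀ i : ℕ, i ≤ p.length → ∃ q : G.Walk u (p.getVert i), q.length = i := by
  induction p with
  | nil =>
    intro i hi
    simp only [Walk.length_nil, Nat.le_zero] at hi
    subst hi
    exact ⟨Walk.nil, rfl⟩
  | @cons a b c h p ih =>
    intro i hi
    match i with
    | 0 => exact ⟨Walk.nil.copy rfl (p.cons h).getVert_zero.symm, by simp⟩
    | (i + 1) =>
      obtain ⟨q, hq⟩ := ih i (by simpa [Walk.length_cons] using hi)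
      exact ⟨(q.cons h).copy rfl (Walk.getVert_cons_succ p h).symm, by simp [hq]⟩

lemma walk_drop {V : Type*} {G : SimpleGraph V} {u v : V} (p : G.Walk u v) :
    ∀ i : ℕ, ∃ q : G.Walk (p.getVert i) v, q.length = p.length - i := by
  induction p with
  | nil =>
    intro i
    exact ⟨Walk.nil.copy (Walk.getVert_zero Walk.nil).symm rfl |>.copy (by
      cases i <;> rfl) rfl, by simp⟩
  | @cons a b c h p ih =>
    intro i
    match i with
    | 0 => exact ⟨(p.cons h).copy ((p.cons h).getVert_zero).symm rfl, by simp⟩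
    | (i + 1) =>
      obtain ⟨q, hq⟩ := ih i
      exact ⟨q.copy (Walk.getVert_cons_succ p h).symm rfl, by simp [hq]⟩

lemma dist_getVert {V : Type*} {G : SimpleGraph V} (hconn : G.Connected) {u v : V}
    (p : G.Walk u v) (hp : p.length = G.dist u v) {i : ℕ} (hi : i ≤ p.length) :
    G.dist u (p.getVert i) = i := by
  obtain ⟨q, hq⟩ := walk_take p i hi
  obtain ⟨q', hq'⟩ := walk_drop p i
  have h1 : G.dist u (p.getVert i) ≤ i := by have := dist_le q; omega
  have h2 : G.dist u v ≤ G.dist u (p.getVert i) + G.dist (p.getVert i) v :=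
    hconn.dist_triangle
  have h3 : G.dist (p.getVert i) v ≤ p.length - i := hq' ▸ dist_le q'
  omega

lemma dist_le_of_pathFree {V : Type*} {G : SimpleGraph V} {t : ℕ} (ht : 2 ≤ t)
    (hconn : G.Connected) (hPt : IsFree (SimpleGraph.pathGraph t) G) (v w : V) :
    G.dist v w ≤ t - 2 := by
  by_contra hlt
  push_neg at hlt
  have hd : t - 1 ≤ G.dist v w := by omega
  obtain ⟨p, hp⟩ := hconn.exists_walk_length_eq_dist v w
  have hlen : t - 1 ≤ p.length := by omega
  have hle : ∀ i : Fin t, (i : ℕ) ≤ p.length := fun i => by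
    have := i.isLt; omega
  have hdist : ∀ i : Fin t, G.dist v (p.getVert i) = i := fun i =>
    dist_getVert hconn p hp (hle i)
  apply hPt
  refine ⟨⟨⟨fun i => p.getVert i, ?_⟩, ?_⟩⟩
  · intro a b hab
    simp only at hab
    have : (a : ℕ) = (b : ℕ) := by rw [← hdist a, ← hdist b, hab]
    exact Fin.ext this
  · intro a b
    change G.Adj (p.getVert a) (p.getVert b) ↔ _
    rw [pathGraph_adj]
    constructor
    · intro h
      have h1 : G.dist v (p.getVert b) ≤ G.dist v (p.getVert a) + 1 := by
        have := hconn.dist_triangle (u := v) (v := p.getVert a) (w := p.getVert b)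
        rwa [dist_eq_one_iff_adj.mpr h] at this
      have h2 : G.dist v (p.getVert a) ≤ G.dist v (p.getVert b) + 1 := by
        have := hconn.dist_triangle (u := v) (v := p.getVert b) (w := p.getVert a)
        rwa [dist_eq_one_iff_adj.mpr h.symm] at this
      rw [hdist a, hdist b] at h1 h2
      have hne : (a : ℕ) ≠ (b : ℕ) := by
        intro hc
        exact h.ne (by rw [Fin.ext hc])
      omega
    · rintro (h | h)
      · have ha : (a : ℕ) < p.length := by
          have := b.isLt; omega
        have := p.adj_getVert_succ ha
        rwa [h] at this
      · have hb : (b : ℕ) < p.length := by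
          have := a.isLt; omega
        have := p.adj_getVert_succ hb
        rw [h] at this
        exact this.symm

theorem stmt0 (s t : ℕ) (hs : 1 ≤ s) (ht : 2 ≤ t)
    (V : Type) [Fintype V] (G : SimpleGraph V)
    (hconn : G.Connected)
    (hPt : IsFree (SimpleGraph.pathGraph t) G)
    (hSDK : IsFree (SDK s) G)
    (hK4 : IsFree (completeGraph (Fin 4)) G) :
    ∃ D : Finset V, (∀ v : V, v ∉ D → ∃ d ∈ D, G.Adj v d) ∧
      D.card ≤ (1 + ramseyNumber 4 (ramseyNumber 4 s)) ^ (t - 2) := by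
  classical
  set r := ramseyNumber 4 (ramseyNumber 4 s) with hr
  obtain ⟨v0⟩ := hconn.nonempty
  choose A hA1 hA2 hA3 using fun u : V => exists_small_dominator hSDK hK4 u
  set D : ℕ → Finset V := fun n => Nat.rec {v0} (fun _ Dn => Dn ∪ Dn.biUnion A) n with hD
  have hD0 : D 0 = {v0} := rfl
  have hDsucc : ∀ n, D (n + 1) = D n ∪ (D n).biUnion A := fun n => rfl
  have hmono : ∀ n, D n ⊆ D (n + 1) := fun n => by
    rw [hDsucc]; exact Finset.subset_union_left
  have hcard : ∀ n, (D n).card ≤ (1 + r) ^ n := by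
    intro n
    induction n with
    | zero => simp [hD0]
    | succ n ih =>
      rw [hDsucc]
      calc (D n ∪ (D n).biUnion A).card
          ≤ (D n).card + ((D n).biUnion A).card := Finset.card_union_le _ _
        _ ≤ (D n).card + ∑ u ∈ D n, (A u).card := by
            have := Finset.card_biUnion_le (s := D n) (t := A)
            omega
        _ ≤ (D n).card + (D n).card * r := by
            have : ∑ u ∈ D n, (A u).card ≤ (D n).card * r := by
              calc ∑ u ∈ D n, (A u).card ≤ ∑ _u ∈ D n, r :=
                    Finset.sum_le_sum (fun u _ => hA2 u)
                _ = (D n).card * r := by rw [Finset.sum_const, smul_eq_mul]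
            omega
        _ = (D n).card * (1 + r) := by ring
        _ ≤ (1 + r) ^ n * (1 + r) := Nat.mul_le_mul_right _ ih
        _ = (1 + r) ^ (n + 1) := by ring
  have hdom : ∀ n, ∀ w : V, G.dist v0 w ≤ n + 1 → w ∈ D n ∨ ∃ d ∈ D n, G.Adj w d := by
    intro n
    induction n with
    | zero =>
      intro w hw
      rcases Nat.le_one_iff_eq_zero_or_eq_one.mp hw with h | h
      · left
        rw [hD0, Finset.mem_singleton]
        exact ((hconn.dist_eq_zero_iff).mp h).symm
      · right
        exact ⟨v0, by rw [hD0]; simp, (dist_eq_one_iff_adj.mp h).symm⟩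
    | succ n ih =>
      intro w hw
      by_cases hle : G.dist v0 w ≤ n + 1
      · rcases ih w hle with h | ⟨d, hd, hadj⟩
        · exact Or.inl (hmono n h)
        · exact Or.inr ⟨d, hmono n hd, hadj⟩
      · have heq : G.dist v0 w = n + 2 := by omega
        obtain ⟨p, hp⟩ := hconn.exists_walk_length_eq_dist v0 w
        have hplen : p.length = n + 2 := by omega
        set z := p.getVert (n + 1) with hz
        have hdz : G.dist v0 z = n + 1 := dist_getVert hconn p hp (by omega)
        have hzw : G.Adj z w := by
          have := p.adj_getVert_succ (i := n + 1) (by omega)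
          rwa [show p.getVert (n + 2) = w from p.getVert_of_length_le (by omega)] at this
        rcases ih z (le_of_eq hdz) with h | ⟨d, hd, hadj⟩
        · exact Or.inr ⟨z, hmono n h, hzw.symm⟩
        · -- hadj : G.Adj z d
          by_cases h1 : w = d
          · exact Or.inl (hmono n (h1 ▸ hd))
          by_cases h2 : G.Adj d w
          · exact Or.inr ⟨d, hmono n hd, h2.symm⟩
          · have := hA3 d w h2 h1 ⟨z, hadj.symm, hzw⟩
            obtain ⟨a, haA, haw⟩ := this
            refine Or.inr ⟨a, ?_, haw⟩
            rw [hDsucc]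
            exact Finset.mem_union_right _ (Finset.mem_biUnion.mpr ⟨d, hd, haA⟩)
  refine ⟨D (t - 2), ?_, hcard (t - 2)⟩
  intro w hw
  have := hdom (t - 2) w (by
    have := dist_le_of_pathFree ht hconn hPt v0 w
    omega)
  rcases this with h | h
  · exact absurd h hw
  · exact h
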